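/- arXiv:0804.1095 — 2 statements merged into one kernel-verified Lean document; each statement's English description precedes it below -/
import Mathlib

section
/- For any graphs G and H, the optimal pegging number of the Cartesian product satisfies p(G × H) ≤ p(G)·p(H). -/
open SimpleGraph Finset

variable {V : Type*} {W : Type*}

/-- A pegging move: remove pegs from adjacent pegged vertices `u, v`,
place a peg on an empty vertex `w` adjacent to `v`. -/
def PegMove {V : Type*} (G : SimpleGraph V) [DecidableEq V] (D D' : Finset V) : Prop :=
  ∃ u v w : V, G.Adj u v ∧ G.Adj v w ∧ u ∈ D ∧ v ∈ D ∧ w ∉ D ∧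
    D' = insert w ((D.erase u).erase v)

/-- The reach of a distribution: all vertices reachable by a finite
sequence of pegging moves. -/
def PegReach {V : Type*} (G : SimpleGraph V) [DecidableEq V] (D : Finset V) : Set V :=
  {t | ∃ D' : Finset V, Relation.ReflTransGen (PegMove G) D D' ∧ t ∈ D'}

/-- The pegging number: least positive `k` such that every distribution of
`k` pegs has full reach. -/
noncomputable def PeggingNumber {V : Type*} (G : SimpleGraph V) [DecidableEq V] : ℕ :=
  sInf {k | 0 < k ∧ ∀ D : Finset V, D.card = k → PegReach G D = Set.univ}

/-- The optimal pegging number: least positive `k` such that some distribution of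
`k` pegs has full reach. -/
noncomputable def OptPeggingNumber {V : Type*} (G : SimpleGraph V) [DecidableEq V] : ℕ :=
  sInf {k | 0 < k ∧ ∃ D : Finset V, D.card = k ∧ PegReach G D = Set.univ}
section Aux
variable [DecidableEq V] [DecidableEq W] (G : SimpleGraph V) (H : SimpleGraph W)

lemma lift_H_move {C C' : Finset W} (h : PegMove H C C') :
    ∀ (A : Finset V) (T : Finset (V × W)), (∀ a ∈ A, ∀ b, (a, b) ∉ T) →
    Relation.ReflTransGen (PegMove (G □ H)) (A ×ˢ C ∪ T) (A ×ˢ C' ∪ T) := by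
  intro A
  induction A using Finset.induction with
  | empty =>
    intro T _
    simp only [Finset.empty_product, Finset.empty_union]
    exact Relation.ReflTransGen.refl
  | @insert a A' ha ih =>
    intro T hT
    obtain ⟨u, v, w, huv, hvw, hu, hv, hw, hC'⟩ := h
    have key1 : (insert a A' : Finset V) ×ˢ C ∪ T = A' ×ˢ C ∪ ({a} ×ˢ C ∪ T) := by
      ext ⟨x, y⟩; simp [Finset.mem_product]; tauto
    have key2 : (insert a A' : Finset V) ×ˢ C' ∪ T = A' ×ˢ C' ∪ ({a} ×ˢ C' ∪ T) := by
      ext ⟨x, y⟩; simp [Finset.mem_product]; tauto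
    rw [key1, key2]
    have hT' : ∀ a' ∈ A', ∀ b, (a', b) ∉ ({a} ×ˢ C ∪ T) := by
      intro a' ha' b hb
      rcases Finset.mem_union.mp hb with h1 | h1
      · have := (Finset.mem_product.mp h1).1
        simp only [Finset.mem_singleton] at this
        exact ha (this ▸ ha')
      · exact hT a' (Finset.mem_insert_of_mem ha') b h1
    refine (ih ({a} ×ˢ C ∪ T) hT').trans (Relation.ReflTransGen.single ?_)
    have hTa : ∀ b, (a, b) ∉ T := hT a (Finset.mem_insert_self a A')
    refine ⟨(a, u), (a, v), (a, w), Or.inr ⟨huv, rfl⟩, Or.inr ⟨hvw, rfl⟩, ?_, ?_, ?_, ?_⟩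
    · simp [Finset.mem_product, hu]
    · simp [Finset.mem_product, hv]
    · intro hc
      rcases Finset.mem_union.mp hc with h1 | h1
      · exact ha (Finset.mem_product.mp h1).1
      rcases Finset.mem_union.mp h1 with h2 | h2
      · exact hw (Finset.mem_product.mp h2).2
      · exact hTa w h2
    · subst hC'
      ext ⟨x, y⟩
      have hxy : x = a → (x, y) ∉ T := fun h => h ▸ hTa y
      have hne : u ≠ v := huv.ne
      have hwu : w ≠ u := fun h => hw (h ▸ hu)
      have hwv : w ≠ v := fun h => hw (h ▸ hv)
      simp only [Finset.mem_union, Finset.mem_product, Finset.mem_singleton,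
        Finset.mem_insert, Finset.mem_erase, Prod.mk.injEq, Prod.ext_iff]
      by_cases hx : x = a <;> subst_vars <;> simp_all <;> tauto

lemma lift_G_move {B B' : Finset V} (y : W) (T : Finset (V × W))
    (hT : ∀ x, (x, y) ∉ T) (h : PegMove G B B') :
    PegMove (G □ H) (B ×ˢ ({y} : Finset W) ∪ T) (B' ×ˢ ({y} : Finset W) ∪ T) := by
  obtain ⟨u, v, w, huv, hvw, hu, hv, hw, hB'⟩ := h
  refine ⟨(u, y), (v, y), (w, y), Or.inl ⟨huv, rfl⟩, Or.inl ⟨hvw, rfl⟩, ?_, ?_, ?_, ?_⟩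
  · simp [Finset.mem_product, hu]
  · simp [Finset.mem_product, hv]
  · intro hc
    rcases Finset.mem_union.mp hc with h1 | h1
    · exact hw (Finset.mem_product.mp h1).1
    · exact hT w h1
  · subst hB'
    ext ⟨x, z⟩
    have hxz : z = y → (x, z) ∉ T := fun h => h ▸ hT x
    have hne : u ≠ v := huv.ne
    have hwu : w ≠ u := fun h => hw (h ▸ hu)
    have hwv : w ≠ v := fun h => hw (h ▸ hv)
    simp only [Finset.mem_union, Finset.mem_product, Finset.mem_singleton,
      Finset.mem_insert, Finset.mem_erase, Prod.mk.injEq, Prod.ext_iff]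
    by_cases hz : z = y <;> subst_vars <;> simp_all <;> tauto

lemma lift_H_chain {C C' : Finset W} (h : Relation.ReflTransGen (PegMove H) C C')
    (A : Finset V) :
    Relation.ReflTransGen (PegMove (G □ H)) (A ×ˢ C) (A ×ˢ C') := by
  induction h with
  | refl => exact Relation.ReflTransGen.refl
  | tail _ h2 ih =>
    refine ih.trans ?_
    have := lift_H_move G H h2 A ∅ (by simp)
    simpa using this

lemma lift_G_chain {B B' : Finset V} (h : Relation.ReflTransGen (PegMove G) B B')
    (y : W) (T : Finset (V × W)) (hT : ∀ x, (x, y) ∉ T) :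
    Relation.ReflTransGen (PegMove (G □ H))
      (B ×ˢ ({y} : Finset W) ∪ T) (B' ×ˢ ({y} : Finset W) ∪ T) := by
  induction h with
  | refl => exact Relation.ReflTransGen.refl
  | tail _ h2 ih => exact ih.tail (lift_G_move G H y T hT h2)

lemma reach_full (DG : Finset V) (DH : Finset W) (hG : PegReach G DG = Set.univ)
    (hH : PegReach H DH = Set.univ) : PegReach (G □ H) (DG ×ˢ DH) = Set.univ := by
  apply Set.eq_univ_of_forall
  rintro ⟨x, y⟩
  have hy : y ∈ PegReach H DH := hH ▸ Set.mem_univ y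
  obtain ⟨C, hC, hyC⟩ := hy
  have hx : x ∈ PegReach G DG := hG ▸ Set.mem_univ x
  obtain ⟨B, hB, hxB⟩ := hx
  have step1 := lift_H_chain G H hC DG
  have split : DG ×ˢ C = DG ×ˢ ({y} : Finset W) ∪ DG ×ˢ (C.erase y) := by
    ext ⟨p, q⟩
    simp only [Finset.mem_union, Finset.mem_product, Finset.mem_singleton, Finset.mem_erase]
    constructor
    · rintro ⟨hp, hq⟩
      by_cases hqy : q = y
      · exact Or.inl ⟨hp, hqy⟩
      · exact Or.inr ⟨hp, hqy, hq⟩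
    · rintro (⟨hp, rfl⟩ | ⟨hp, _, hq⟩)
      · exact ⟨hp, hyC⟩
      · exact ⟨hp, hq⟩
  have hT : ∀ p, (p, y) ∉ DG ×ˢ (C.erase y) := by
    intro p hc
    exact ((Finset.mem_erase.mp (Finset.mem_product.mp hc).2).1) rfl
  have step2 := lift_G_chain G H hB y (DG ×ˢ (C.erase y)) hT
  refine ⟨B ×ˢ ({y} : Finset W) ∪ DG ×ˢ (C.erase y), step1.trans (split ▸ step2), ?_⟩
  exact Finset.mem_union_left _ (Finset.mem_product.mpr ⟨hxB, Finset.mem_singleton_self y⟩)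

end Aux

lemma pegSet_nonempty [Fintype V] [DecidableEq V] [Nonempty V] (G : SimpleGraph V) :
    {k | 0 < k ∧ ∃ D : Finset V, D.card = k ∧ PegReach G D = Set.univ}.Nonempty :=
  ⟨Fintype.card V, Fintype.card_pos, Finset.univ, Finset.card_univ,
    Set.eq_univ_of_forall fun t =>
      ⟨Finset.univ, Relation.ReflTransGen.refl, Finset.mem_univ t⟩⟩

lemma optP_empty [DecidableEq V] [IsEmpty V] (G : SimpleGraph V) :
    OptPeggingNumber G = 0 := by
  rw [OptPeggingNumber]
  convert Nat.sInf_empty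
  rw [Set.eq_empty_iff_forall_notMem]
  rintro k ⟨hk, D, hD, -⟩
  obtain ⟨x, -⟩ := Finset.card_pos.mp (hD ▸ hk)
  exact IsEmpty.false x


theorem optPeggingNumber_boxProd_le {V W : Type*} [Fintype V] [Fintype W]
    [DecidableEq V] [DecidableEq W] (G : SimpleGraph V) (H : SimpleGraph W) :
    OptPeggingNumber (G □ H) ≤ OptPeggingNumber G * OptPeggingNumber H := by
  rcases isEmpty_or_nonempty V with hV | hV
  · haveI : IsEmpty (V × W) := Prod.isEmpty_left
    rw [optP_empty]
    exact Nat.zero_le _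
  rcases isEmpty_or_nonempty W with hW | hW
  · haveI : IsEmpty (V × W) := Prod.isEmpty_right
    rw [optP_empty]
    exact Nat.zero_le _
  obtain ⟨hp, DG, hDG, hDGr⟩ := Nat.sInf_mem (pegSet_nonempty G)
  obtain ⟨hq, DH, hDH, hDHr⟩ := Nat.sInf_mem (pegSet_nonempty H)
  exact Nat.sInf_le ⟨Nat.mul_pos hp hq, DG ×ˢ DH,
    by rw [Finset.card_product, hDG, hDH]; rfl,
    reach_full G H DG DH hDGr hDHr⟩
end

section
/- For every positive integer n, the optimal pegging number of the hypercube Q_n satisfies (√5 − 1)^n ≤ p(Q_n). -/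
open SimpleGraph Finset

variable {V : Type*} {W : Type*}

/-- The hypercube graph `Q n`: binary `n`-tuples, adjacent iff they differ in
exactly one coordinate. -/
def hypercubeGraph (n : ℕ) : SimpleGraph (Fin n → Bool) where
  Adj x y := hammingDist x y = 1
  symm := ⟨fun x y h => by simpa only [hammingDist_comm y x] using h⟩
  loopless := ⟨fun x h => by simp [hammingDist_self] at h⟩

noncomputable def sig : ℝ := (Real.sqrt 5 - 1) / 2

lemma sqrt5_lt : (2:ℝ) < Real.sqrt 5 := by
  have : (2:ℝ) = Real.sqrt 4 := by
    rw [show (4:ℝ) = 2^2 by norm_num, Real.sqrt_sq]; norm_num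
  rw [this]; exact Real.sqrt_lt_sqrt (by norm_num) (by norm_num)

lemma sqrt5_lt3 : Real.sqrt 5 < 3 := by
  have : (3:ℝ) = Real.sqrt 9 := by
    rw [show (9:ℝ) = 3^2 by norm_num, Real.sqrt_sq]; norm_num
  rw [this]; exact Real.sqrt_lt_sqrt (by norm_num) (by norm_num)

lemma sig_pos : 0 < sig := by
  have := sqrt5_lt; unfold sig; linarith

lemma sig_lt_one : sig < 1 := by
  have := sqrt5_lt3; unfold sig; linarith

lemma sig_sq : sig + sig^2 = 1 := by
  have h : Real.sqrt 5 ^ 2 = 5 := Real.sq_sqrt (by norm_num)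
  unfold sig; ring_nf; nlinarith [h]

lemma key (a b c : ℕ) (hb : b ≤ c + 1) (ha : a ≤ b + 1) :
    sig ^ c ≤ sig ^ a + sig ^ b := by
  have h0 := sig_pos
  have h1 := sig_lt_one
  have hp : ∀ m k : ℕ, m ≤ k → sig ^ k ≤ sig ^ m := fun m k h =>
    pow_le_pow_of_le_one (le_of_lt h0) (le_of_lt h1) h
  cases b with
  | zero =>
    have : sig ^ c ≤ 1 := pow_le_one₀ (le_of_lt h0) (le_of_lt h1)
    have : (0:ℝ) < sig ^ a := pow_pos h0 a
    simp only [pow_zero]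
    nlinarith [pow_le_one₀ (le_of_lt h0) (le_of_lt h1) (n := c)]
  | succ b' =>
    have hc : sig ^ c ≤ sig ^ b' := hp b' c (by omega)
    have hexp : sig ^ b' = sig ^ (b'+1) + sig ^ (b'+2) := by
      have : sig ^ b' * (sig + sig^2) = sig ^ b' := by rw [sig_sq]; ring
      calc sig ^ b' = sig ^ b' * (sig + sig^2) := by rw [sig_sq]; ring
        _ = sig ^ (b'+1) + sig ^ (b'+2) := by ring
    have ha2 : sig ^ (b'+2) ≤ sig ^ a := hp a (b'+2) (by omega)
    calc sig ^ c ≤ sig ^ b' := hc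
      _ = sig ^ (b'+1) + sig ^ (b'+2) := hexp
      _ ≤ sig ^ a + sig ^ (b'+1) := by linarith

noncomputable def wt {n : ℕ} (t : Fin n → Bool) (D : Finset (Fin n → Bool)) : ℝ :=
  ∑ u ∈ D, sig ^ hammingDist u t

lemma wt_move {n : ℕ} (t : Fin n → Bool) (D D' : Finset (Fin n → Bool))
    (h : PegMove (hypercubeGraph n) D D') : wt t D' ≤ wt t D := by
  obtain ⟨u, v, w, huv, hvw, hu, hv, hw, hD'⟩ := h
  have huv1 : hammingDist u v = 1 := huv
  have hvw1 : hammingDist v w = 1 := hvw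
  have hne : u ≠ v := by
    intro h; rw [h, hammingDist_self] at huv1; simp at huv1
  have hv' : v ∈ D.erase u := Finset.mem_erase.2 ⟨hne.symm, hv⟩
  have hwmem : w ∉ (D.erase u).erase v := fun h =>
    hw (Finset.mem_of_mem_erase (Finset.mem_of_mem_erase h))
  have hb_le : hammingDist v t ≤ hammingDist w t + 1 := by
    calc hammingDist v t ≤ hammingDist v w + hammingDist w t := hammingDist_triangle _ _ _
      _ = hammingDist w t + 1 := by rw [hvw1]; ring
  have ha_le : hammingDist u t ≤ hammingDist v t + 1 := by
    calc hammingDist u t ≤ hammingDist u v + hammingDist v t := hammingDist_triangle _ _ _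
      _ = hammingDist v t + 1 := by rw [huv1]; ring
  have hkey := key (hammingDist u t) (hammingDist v t) (hammingDist w t) hb_le ha_le
  have e1 : wt t D' = sig ^ hammingDist w t + ∑ x ∈ (D.erase u).erase v, sig ^ hammingDist x t := by
    rw [hD', wt, Finset.sum_insert hwmem]
  have e2 : (∑ x ∈ (D.erase u).erase v, sig ^ hammingDist x t) + sig ^ hammingDist v t
      = ∑ x ∈ D.erase u, sig ^ hammingDist x t := Finset.sum_erase_add _ _ hv'
  have e3 : (∑ x ∈ D.erase u, sig ^ hammingDist x t) + sig ^ hammingDist u t = wt t D :=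
    Finset.sum_erase_add _ _ hu
  simp only [wt] at e1 e2 e3 ⊢
  linarith

lemma wt_reach {n : ℕ} (t : Fin n → Bool) (D D' : Finset (Fin n → Bool))
    (h : Relation.ReflTransGen (PegMove (hypercubeGraph n)) D D') : wt t D' ≤ wt t D := by
  induction h with
  | refl => exact le_refl _
  | tail _ hstep ih => exact le_trans (wt_move t _ _ hstep) ih

lemma one_le_wt {n : ℕ} (t : Fin n → Bool) (D : Finset (Fin n → Bool))
    (h : t ∈ PegReach (hypercubeGraph n) D) : 1 ≤ wt t D := by
  obtain ⟨D', hrel, ht⟩ := h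
  have h1 : 1 ≤ wt t D' := by
    have := Finset.single_le_sum (f := fun u => sig ^ hammingDist u t)
      (fun i _ => le_of_lt (pow_pos sig_pos _)) ht
    simpa [wt, hammingDist_self] using this
  exact le_trans h1 (wt_reach t D D' hrel)

lemma sum_wt {n : ℕ} (u : Fin n → Bool) :
    ∑ t : Fin n → Bool, sig ^ hammingDist u t = (1 + sig) ^ n := by
  have h1 : ∀ t : Fin n → Bool, sig ^ hammingDist u t
      = ∏ i : Fin n, (if u i = t i then (1:ℝ) else sig) := by
    intro t
    rw [← Finset.prod_filter_mul_prod_filter_not Finset.univ (fun i => u i = t i)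
      (fun i => if u i = t i then (1:ℝ) else sig)]
    rw [Finset.prod_congr rfl (fun i hi => if_pos (Finset.mem_filter.1 hi).2),
        Finset.prod_congr rfl (fun i hi => if_neg (Finset.mem_filter.1 hi).2)]
    rw [Finset.prod_const, Finset.prod_const, one_pow, one_mul, hammingDist]
  calc ∑ t : Fin n → Bool, sig ^ hammingDist u t
      = ∑ t : Fin n → Bool, ∏ i, (if u i = t i then (1:ℝ) else sig) :=
        Finset.sum_congr rfl fun t _ => h1 t
    _ = ∏ i : Fin n, ∑ b : Bool, (if u i = b then (1:ℝ) else sig) :=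
        (Fintype.prod_sum (fun i b => if u i = b then (1:ℝ) else sig)).symm
    _ = ∏ _i : Fin n, (1 + sig) := by
        apply Finset.prod_congr rfl
        intro i _
        cases h : u i <;> simp [h] <;> ring
    _ = (1 + sig) ^ n := by simp

lemma two_eq : (Real.sqrt 5 - 1) * (1 + sig) = 2 := by
  have h : Real.sqrt 5 ^ 2 = 5 := Real.sq_sqrt (by norm_num)
  unfold sig; nlinarith [h]

lemma card_lower {n : ℕ} (D : Finset (Fin n → Bool))
    (h : PegReach (hypercubeGraph n) D = Set.univ) :
    (Real.sqrt 5 - 1) ^ n ≤ (D.card : ℝ) := by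
  have hpos : (0:ℝ) < (1 + sig) ^ n := pow_pos (by have := sig_pos; linarith) n
  have hswap : ∑ t : Fin n → Bool, wt t D = (D.card : ℝ) * (1 + sig) ^ n := by
    unfold wt
    rw [Finset.sum_comm]
    rw [Finset.sum_congr rfl (fun u _ => sum_wt u)]
    rw [Finset.sum_const, nsmul_eq_mul]
  have h2 : (2:ℝ) ^ n ≤ ∑ t : Fin n → Bool, wt t D := by
    have hle : ∀ t ∈ (Finset.univ : Finset (Fin n → Bool)), (1:ℝ) ≤ wt t D := by
      intro t _
      exact one_le_wt t D (by rw [h]; trivial)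
    calc (2:ℝ) ^ n = ∑ _t : Fin n → Bool, (1:ℝ) := by
          simp [Finset.card_univ]
      _ ≤ ∑ t : Fin n → Bool, wt t D := Finset.sum_le_sum hle
  rw [hswap] at h2
  have key2 : (Real.sqrt 5 - 1) ^ n * (1 + sig) ^ n = 2 ^ n := by
    rw [← mul_pow, two_eq]
  have hh : (Real.sqrt 5 - 1) ^ n * (1 + sig) ^ n ≤ (D.card : ℝ) * (1 + sig) ^ n := by
    rw [key2]; exact h2
  exact le_of_mul_le_mul_right hh hpos

theorem optPeggingNumber_hypercube_lower (n : ℕ) (hn : 0 < n) :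
    (Real.sqrt 5 - 1) ^ n ≤ (OptPeggingNumber (hypercubeGraph n) : ℝ) := by
  have hfull : PegReach (hypercubeGraph n) (Finset.univ) = Set.univ := by
    ext t
    simp only [Set.mem_univ, iff_true]
    exact ⟨Finset.univ, Relation.ReflTransGen.refl, Finset.mem_univ t⟩
  have hmem : 2 ^ n ∈ {k | 0 < k ∧ ∃ D : Finset (Fin n → Bool),
      D.card = k ∧ PegReach (hypercubeGraph n) D = Set.univ} := by
    refine ⟨Nat.pow_pos (by norm_num), Finset.univ, ?_, hfull⟩
    simp [Finset.card_univ]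
  have := Nat.sInf_mem ⟨2 ^ n, hmem⟩
  obtain ⟨hk, D, hcard, hreach⟩ := this
  rw [OptPeggingNumber, ← hcard]
  exact_mod_cast card_lower D hreach
end
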